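/- Fix n ≥ 3 and let H₀ = H(0,…,0,0,0) be the split superalgebra from the class H with all parameters zero. The space of even derivations of H₀ contains two nil-independent derivations d₁, d₂ given by: d₁(e₁)=2e₁, d₁(e_i)=2(i-1)e_i (3≤i≤n), d₁(e₂)=0, d₁(y_i)=(2i-1)y_i (1≤i≤n); and d₂(e₂)=e₂ with d₂ vanishing on all other basis vectors. Both d₁ and d₂ are even derivations of H₀, and for all (c₁,c₂) ≠ (0,0) and all k ≥ 1, (c₁d₁ + c₂d₂)^k ≠ 0. -/

import Mathlib

/-- The split superalgebra H₀ = H(0,…,0,0,0) admits the two nil-independent even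
derivations d₁, d₂ of the statement: both are even derivations, and no nonzero
linear combination of them is nilpotent. -/
theorem statement17 {V : Type*} [AddCommGroup V] [Module ℂ V]
    (n : ℕ) (hn : 3 ≤ n)
    (bas : Module.Basis (Fin n ⊕ Fin n) ℂ V)
    (eN yN : ℕ → V)
    (heN : ∀ k (h : 1 ≤ k ∧ k ≤ n), eN k = bas (Sum.inl ⟨k - 1, by omega⟩))
    (heN0 : ∀ k, ¬(1 ≤ k ∧ k ≤ n) → eN k = 0)
    (hyN : ∀ k (h : 1 ≤ k ∧ k ≤ n), yN k = bas (Sum.inr ⟨k - 1, by omega⟩))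
    (hyN0 : ∀ k, ¬(1 ≤ k ∧ k ≤ n) → yN k = 0)
    (br : V →ₗ[ℂ] V →ₗ[ℂ] V)
    -- multiplication table of H₀:
    (hee1 : ∀ i, 1 ≤ i → i ≤ n →
      br (eN i) (eN 1) = if i = 1 then eN 3 else if i = 2 then 0 else eN (i + 1))
    (hee0 : ∀ i j, 1 ≤ i → i ≤ n → 2 ≤ j → j ≤ n → br (eN i) (eN j) = 0)
    (hye1 : ∀ j, 1 ≤ j → j ≤ n → br (yN j) (eN 1) = yN (j + 1))
    (hye0 : ∀ j i, 1 ≤ j → j ≤ n → 2 ≤ i → i ≤ n → br (yN j) (eN i) = 0)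
    (hey1 : ∀ i, 1 ≤ i → i ≤ n → br (eN i) (yN 1) =
      if i = 1 then (1 / 2 : ℂ) • yN 2 else if i = 2 then 0 else (1 / 2 : ℂ) • yN i)
    (hey0 : ∀ i j, 1 ≤ i → i ≤ n → 2 ≤ j → j ≤ n → br (eN i) (yN j) = 0)
    (hyy1 : ∀ j, 1 ≤ j → j ≤ n →
      br (yN j) (yN 1) = if j = 1 then eN 1 else eN (j + 1))
    (hyy0 : ∀ j k, 1 ≤ j → j ≤ n → 2 ≤ k → k ≤ n → br (yN j) (yN k) = 0)
    -- the linear maps d₁ and d₂: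
    (d1 d2 : Module.End ℂ V)
    (hd1e1 : d1 (eN 1) = (2 : ℂ) • eN 1) (hd1e2 : d1 (eN 2) = 0)
    (hd1e : ∀ i, 3 ≤ i → i ≤ n → d1 (eN i) = (2 * ((i : ℂ) - 1)) • eN i)
    (hd1y : ∀ i, 1 ≤ i → i ≤ n → d1 (yN i) = (2 * (i : ℂ) - 1) • yN i)
    (hd2e2 : d2 (eN 2) = eN 2)
    (hd2e : ∀ i, 1 ≤ i → i ≤ n → i ≠ 2 → d2 (eN i) = 0)
    (hd2y : ∀ i, 1 ≤ i → i ≤ n → d2 (yN i) = 0) :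
    -- d₁ and d₂ are even derivations of H₀:
    (∀ x ∈ Submodule.span ℂ (Set.range fun i : Fin n => bas (Sum.inl i)),
      d1 x ∈ Submodule.span ℂ (Set.range fun i : Fin n => bas (Sum.inl i)) ∧
      d2 x ∈ Submodule.span ℂ (Set.range fun i : Fin n => bas (Sum.inl i))) ∧
    (∀ x ∈ Submodule.span ℂ (Set.range fun j : Fin n => bas (Sum.inr j)),
      d1 x ∈ Submodule.span ℂ (Set.range fun j : Fin n => bas (Sum.inr j)) ∧
      d2 x ∈ Submodule.span ℂ (Set.range fun j : Fin n => bas (Sum.inr j))) ∧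
    (∀ u v : V, d1 (br u v) = br (d1 u) v + br u (d1 v)) ∧
    (∀ u v : V, d2 (br u v) = br (d2 u) v + br u (d2 v)) ∧
    -- nil-independence:
    (∀ c1 c2 : ℂ, ¬(c1 = 0 ∧ c2 = 0) → ∀ k : ℕ, 1 ≤ k → (c1 • d1 + c2 • d2) ^ k ≠ 0) := by
  -- basis identifications
  have ebas : ∀ i : Fin n, bas (Sum.inl i) = eN (i.1 + 1) := by
    intro i
    rw [heN (i.1 + 1) ⟨by omega, by omega⟩]
    exact congrArg bas (congrArg Sum.inl (Fin.ext (Nat.add_sub_cancel i.1 1).symm))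
  have ybas : ∀ i : Fin n, bas (Sum.inr i) = yN (i.1 + 1) := by
    intro i
    rw [hyN (i.1 + 1) ⟨by omega, by omega⟩]
    exact congrArg bas (congrArg Sum.inr (Fin.ext (Nat.add_sub_cancel i.1 1).symm))
  -- eigenvalue descriptions
  have hd1E : ∀ i, 1 ≤ i → i ≤ n → ∃ c : ℂ, d1 (eN i) = c • eN i := by
    intro i h1 h2
    rcases Nat.lt_or_ge i 3 with h | h
    · interval_cases i
      · exact ⟨2, hd1e1⟩
      · exact ⟨0, by simp [hd1e2]⟩
    · exact ⟨_, hd1e i h h2⟩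
  have hd2E : ∀ i, 1 ≤ i → i ≤ n → ∃ c : ℂ, d2 (eN i) = c • eN i := by
    intro i h1 h2
    by_cases h : i = 2
    · exact ⟨1, by simp [h, hd2e2]⟩
    · exact ⟨0, by simp [hd2e i h1 h2 h]⟩
  -- Part 1 & 2 : span preservation (generic)
  have spanE : ∀ (d : Module.End ℂ V),
      (∀ i, 1 ≤ i → i ≤ n → ∃ c : ℂ, d (eN i) = c • eN i) →
      ∀ x ∈ Submodule.span ℂ (Set.range fun i : Fin n => bas (Sum.inl i)),
        d x ∈ Submodule.span ℂ (Set.range fun i : Fin n => bas (Sum.inl i)) := by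
    intro d hd x hx
    refine Submodule.span_induction (fun y hy => ?_) (by simp)
      (fun y z _ _ hy hz => by rw [map_add]; exact add_mem hy hz)
      (fun c y _ hy => by rw [map_smul]; exact Submodule.smul_mem _ _ hy) hx
    obtain ⟨i, rfl⟩ := hy
    obtain ⟨c, hc⟩ := hd (i.1 + 1) (by omega) (by omega)
    show d (bas (Sum.inl i)) ∈ _
    rw [ebas i, hc, ← ebas i]
    exact Submodule.smul_mem _ _ (Submodule.subset_span ⟨i, rfl⟩)
  have spanY : ∀ (d : Module.End ℂ V),
      (∀ i, 1 ≤ i → i ≤ n → ∃ c : ℂ, d (yN i) = c • yN i) →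
      ∀ x ∈ Submodule.span ℂ (Set.range fun j : Fin n => bas (Sum.inr j)),
        d x ∈ Submodule.span ℂ (Set.range fun j : Fin n => bas (Sum.inr j)) := by
    intro d hd x hx
    refine Submodule.span_induction (fun y hy => ?_) (by simp)
      (fun y z _ _ hy hz => by rw [map_add]; exact add_mem hy hz)
      (fun c y _ hy => by rw [map_smul]; exact Submodule.smul_mem _ _ hy) hx
    obtain ⟨i, rfl⟩ := hy
    obtain ⟨c, hc⟩ := hd (i.1 + 1) (by omega) (by omega)
    show d (bas (Sum.inr i)) ∈ _
    rw [ybas i, hc, ← ybas i]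
    exact Submodule.smul_mem _ _ (Submodule.subset_span ⟨i, rfl⟩)
  -- Parts 3 & 4 : generic derivation lemma for diagonal maps
  have deriv : ∀ (d : Module.End ℂ V) (a b : ℕ → ℂ),
      (∀ i, 1 ≤ i → i ≤ n → d (eN i) = a i • eN i) →
      (∀ i, 1 ≤ i → i ≤ n → d (yN i) = b i • yN i) →
      a 3 = a 1 + a 1 →
      (∀ i, 3 ≤ i → i + 1 ≤ n → a (i + 1) = a i + a 1) →
      (∀ j, 1 ≤ j → j + 1 ≤ n → b (j + 1) = b j + a 1) →
      (∀ i, 3 ≤ i → i ≤ n → b i = a i + b 1) →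
      a 1 = b 1 + b 1 →
      (∀ j, 2 ≤ j → j + 1 ≤ n → a (j + 1) = b j + b 1) →
      ∀ u v : V, d (br u v) = br (d u) v + br u (d v) := by
    intro d a b hde hdy h1 h2 h3 h5 h6 h7
    -- extended eigen facts
    have hde' : ∀ k, d (eN k) = (if 1 ≤ k ∧ k ≤ n then a k else 0) • eN k := by
      intro k
      by_cases h : 1 ≤ k ∧ k ≤ n
      · rw [if_pos h]; exact hde k h.1 h.2
      · rw [if_neg h, heN0 k h]; simp
    have hdy' : ∀ k, d (yN k) = (if 1 ≤ k ∧ k ≤ n then b k else 0) • yN k := by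
      intro k
      by_cases h : 1 ≤ k ∧ k ≤ n
      · rw [if_pos h]; exact hdy k h.1 h.2
      · rw [if_neg h, hyN0 k h]; simp
    -- the four basis-pair cases
    have Pee : ∀ i j, 1 ≤ i → i ≤ n → 1 ≤ j → j ≤ n →
        d (br (eN i) (eN j)) = br (d (eN i)) (eN j) + br (eN i) (d (eN j)) := by
      intro i j hi1 hi2 hj1 hj2
      rw [hde i hi1 hi2, hde j hj1 hj2, map_smul, LinearMap.smul_apply, map_smul]
      rcases Nat.lt_or_ge j 2 with hj | hj
      · have hj' : j = 1 := by omega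
        subst hj'
        rw [hee1 i hi1 hi2]
        rcases Nat.lt_or_ge i 3 with hi | hi
        · interval_cases i
          · rw [if_pos rfl, hde 3 (by omega) (by omega), h1, add_smul]
          · norm_num
        · have hne1 : i ≠ 1 := by omega
          have hne2 : i ≠ 2 := by omega
          rw [if_neg hne1, if_neg hne2]
          rcases Nat.lt_or_ge (i + 1) (n + 1) with hin | hin
          · rw [hde (i + 1) (by omega) (by omega), h2 i hi (by omega), add_smul]
          · rw [heN0 (i + 1) (by omega)]; simp
      · rw [hee0 i j hi1 hi2 hj hj2]; simp
    have Pye : ∀ j i, 1 ≤ j → j ≤ n → 1 ≤ i → i ≤ n →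
        d (br (yN j) (eN i)) = br (d (yN j)) (eN i) + br (yN j) (d (eN i)) := by
      intro j i hj1 hj2 hi1 hi2
      rw [hdy j hj1 hj2, hde i hi1 hi2, map_smul, LinearMap.smul_apply, map_smul]
      rcases Nat.lt_or_ge i 2 with hi | hi
      · have hi' : i = 1 := by omega
        subst hi'
        rw [hye1 j hj1 hj2]
        rcases Nat.lt_or_ge (j + 1) (n + 1) with hjn | hjn
        · rw [hdy (j + 1) (by omega) (by omega), h3 j hj1 (by omega), add_smul]
        · rw [hyN0 (j + 1) (by omega)]; simp
      · rw [hye0 j i hj1 hj2 hi hi2]; simp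
    have Pey : ∀ i j, 1 ≤ i → i ≤ n → 1 ≤ j → j ≤ n →
        d (br (eN i) (yN j)) = br (d (eN i)) (yN j) + br (eN i) (d (yN j)) := by
      intro i j hi1 hi2 hj1 hj2
      rw [hde i hi1 hi2, hdy j hj1 hj2, map_smul, LinearMap.smul_apply, map_smul]
      rcases Nat.lt_or_ge j 2 with hj | hj
      · have hj' : j = 1 := by omega
        subst hj'
        rw [hey1 i hi1 hi2]
        rcases Nat.lt_or_ge i 3 with hi | hi
        · interval_cases i
          · rw [if_pos rfl, map_smul, hdy 2 (by omega) (by omega), h3 1 (by omega) (by omega)]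
            module
          · norm_num
        · have hne1 : i ≠ 1 := by omega
          have hne2 : i ≠ 2 := by omega
          rw [if_neg hne1, if_neg hne2]
          rw [map_smul, hdy i (by omega) hi2, h5 i hi hi2]
          module
      · rw [hey0 i j hi1 hi2 hj hj2]; simp
    have Pyy : ∀ j k, 1 ≤ j → j ≤ n → 1 ≤ k → k ≤ n →
        d (br (yN j) (yN k)) = br (d (yN j)) (yN k) + br (yN j) (d (yN k)) := by
      intro j k hj1 hj2 hk1 hk2
      rw [hdy j hj1 hj2, hdy k hk1 hk2, map_smul, LinearMap.smul_apply, map_smul]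
      rcases Nat.lt_or_ge k 2 with hk | hk
      · have hk' : k = 1 := by omega
        subst hk'
        rw [hyy1 j hj1 hj2]
        rcases Nat.lt_or_ge j 2 with hj | hj
        · have hj' : j = 1 := by omega
          subst hj'
          rw [if_pos rfl, hde 1 (by omega) (by omega), h6, add_smul]
        · have hne1 : j ≠ 1 := by omega
          rw [if_neg hne1]
          rcases Nat.lt_or_ge (j + 1) (n + 1) with hjn | hjn
          · rw [hde (j + 1) (by omega) (by omega), h7 j hj (by omega), add_smul]
          · rw [heN0 (j + 1) (by omega)]; simp
      · rw [hyy0 j k hj1 hj2 hk hk2]; simp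
    -- base case on basis pairs
    have Pbase : ∀ p q : Fin n ⊕ Fin n,
        d (br (bas p) (bas q)) = br (d (bas p)) (bas q) + br (bas p) (d (bas q)) := by
      intro p q
      rcases p with i | i <;> rcases q with j | j
      · rw [ebas i, ebas j]; exact Pee _ _ (by omega) (by omega) (by omega) (by omega)
      · rw [ebas i, ybas j]; exact Pey _ _ (by omega) (by omega) (by omega) (by omega)
      · rw [ybas i, ebas j]; exact Pye _ _ (by omega) (by omega) (by omega) (by omega)
      · rw [ybas i, ybas j]; exact Pyy _ _ (by omega) (by omega) (by omega) (by omega)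
    -- extend by linearity
    have Q : ∀ u : V, ∀ q : Fin n ⊕ Fin n,
        d (br u (bas q)) = br (d u) (bas q) + br u (d (bas q)) := by
      intro u
      have hu : u ∈ Submodule.span ℂ (Set.range bas) := by rw [bas.span_eq]; trivial
      refine Submodule.span_induction (fun y hy q => ?_) (fun q => by simp)
        (fun x y _ _ hx hy q => ?_) (fun c x _ hx q => ?_) hu
      · obtain ⟨p, rfl⟩ := hy; exact Pbase p q
      · simp only [map_add, LinearMap.add_apply, hx q, hy q]; abel
      · simp only [map_smul, LinearMap.smul_apply, hx q, smul_add]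
    intro u v
    have hv : v ∈ Submodule.span ℂ (Set.range bas) := by rw [bas.span_eq]; trivial
    refine Submodule.span_induction (fun y hy => ?_) (by simp)
      (fun x y _ _ hx hy => ?_) (fun c x _ hx => ?_) hv
    · obtain ⟨q, rfl⟩ := hy; exact Q u q
    · simp only [map_add, hx, hy]; abel
    · simp only [map_smul, hx, smul_add]
  -- instantiate for d1
  have hd1E' : ∀ i, 1 ≤ i → i ≤ n →
      d1 (eN i) = ((fun k : ℕ => if k = 1 then 2 else if k = 2 then 0 else 2 * ((k : ℂ) - 1)) i) • eN i := by
    intro i h1 h2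
    rcases Nat.lt_or_ge i 3 with h | h
    · interval_cases i
      · simpa using hd1e1
      · simp [hd1e2]
    · have : i ≠ 1 := by omega
      have : i ≠ 2 := by omega
      simp only [if_neg ‹i ≠ 1›, if_neg ‹i ≠ 2›]
      exact hd1e i h h2
  have deriv1 : ∀ u v : V, d1 (br u v) = br (d1 u) v + br u (d1 v) := by
    refine deriv d1 (fun k => if k = 1 then 2 else if k = 2 then 0 else 2 * ((k : ℂ) - 1))
      (fun k => 2 * (k : ℂ) - 1) hd1E' (fun i h1 h2 => hd1y i h1 h2) (by norm_num)
      (fun i h3 hin => ?_) (fun j hj1 hjn => by push_cast; ring)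
      (fun i h3 hin => ?_) (by norm_num) (fun j h2 hjn => ?_)
    · have : i + 1 ≠ 1 := by omega
      have : i + 1 ≠ 2 := by omega
      have : i ≠ 1 := by omega
      have : i ≠ 2 := by omega
      simp only [if_neg ‹i + 1 ≠ 1›, if_neg ‹i + 1 ≠ 2›, if_neg ‹i ≠ 1›, if_neg ‹i ≠ 2›]
      push_cast; ring
    · have : i ≠ 1 := by omega
      have : i ≠ 2 := by omega
      simp only [if_neg ‹i ≠ 1›, if_neg ‹i ≠ 2›]
      push_cast; ring
    · have : j + 1 ≠ 1 := by omega
      have : j + 1 ≠ 2 := by omega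
      simp only [if_neg ‹j + 1 ≠ 1›, if_neg ‹j + 1 ≠ 2›]
      push_cast; ring
  -- instantiate for d2
  have hd2E' : ∀ i, 1 ≤ i → i ≤ n →
      d2 (eN i) = ((fun k : ℕ => if k = 2 then (1 : ℂ) else 0) i) • eN i := by
    intro i h1 h2
    by_cases h : i = 2
    · simp [h, hd2e2]
    · simp [h, hd2e i h1 h2 h]
  have deriv2 : ∀ u v : V, d2 (br u v) = br (d2 u) v + br u (d2 v) := by
    refine deriv d2 (fun k => if k = 2 then (1 : ℂ) else 0) (fun _ => 0) hd2E'
      (fun i h1 h2 => by simpa using hd2y i h1 h2) (by norm_num)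
      (fun i h3 hin => ?_) (fun j hj1 hjn => by norm_num) (fun i h3 hin => ?_)
      (by norm_num) (fun j h2 hjn => ?_)
    · have : i + 1 ≠ 2 := by omega
      have : i ≠ 2 := by omega
      simp [‹i + 1 ≠ 2›, ‹i ≠ 2›]
    · have : i ≠ 2 := by omega
      simp [‹i ≠ 2›]
    · have : j + 1 ≠ 2 := by omega
      simp [‹j + 1 ≠ 2›]
  -- eigen facts for span preservation
  have hd1Y : ∀ i, 1 ≤ i → i ≤ n → ∃ c : ℂ, d1 (yN i) = c • yN i :=
    fun i h1 h2 => ⟨_, hd1y i h1 h2⟩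
  have hd2Y : ∀ i, 1 ≤ i → i ≤ n → ∃ c : ℂ, d2 (yN i) = c • yN i :=
    fun i h1 h2 => ⟨0, by simp [hd2y i h1 h2]⟩
  refine ⟨fun x hx => ⟨spanE d1 hd1E x hx, spanE d2 hd2E x hx⟩,
    fun x hx => ⟨spanY d1 hd1Y x hx, spanY d2 hd2Y x hx⟩, deriv1, deriv2, ?_⟩
  -- nil-independence
  have pow_eig : ∀ (f : Module.End ℂ V) (x : V) (c : ℂ), f x = c • x →
      ∀ k : ℕ, (f ^ k) x = c ^ k • x := by
    intro f x c h k
    induction k with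
    | zero => simp
    | succ k ih =>
      rw [pow_succ, Module.End.mul_apply, h, map_smul, ih, smul_smul, ← pow_succ']
  intro c1 c2 hc k hk hzero
  by_cases h1 : c1 = 0
  · have h2 : c2 ≠ 0 := fun h => hc ⟨h1, h⟩
    have hD : (c1 • d1 + c2 • d2) (eN 2) = c2 • eN 2 := by
      simp [h1, hd1e2, hd2e2]
    have := pow_eig _ _ _ hD k
    rw [hzero] at this
    have hne : eN 2 ≠ 0 := by
      rw [heN 2 ⟨by omega, by omega⟩]; exact bas.ne_zero _
    simp only [LinearMap.zero_apply] at this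
    rcases smul_eq_zero.mp this.symm with h | h
    · exact (pow_ne_zero k h2) h
    · exact hne h
  · have hD : (c1 • d1 + c2 • d2) (yN 1) = c1 • yN 1 := by
      have := hd1y 1 (by omega) (by omega)
      norm_num at this
      simp [this, hd2y 1 (by omega) (by omega)]
    have := pow_eig _ _ _ hD k
    rw [hzero] at this
    have hne : yN 1 ≠ 0 := by
      rw [hyN 1 ⟨by omega, by omega⟩]; exact bas.ne_zero _
    simp only [LinearMap.zero_apply] at this
    rcases smul_eq_zero.mp this.symm with h | h
    · exact (pow_ne_zero k h1) h
    · exact hne h
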